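/- Let F be a finite field with q elements, a ∈ F nonzero, n ≥ 2, 1 ≤ k ≤ ⌊n/2⌋, and b ∈ {0, a}. Then the centralizer of X_k(b,a) in GL(n,F), i.e. the set {P ∈ GL(n,F) : P·X_k(b,a) = X_k(b,a)·P}, has cardinality equal to |GL(n−k,F)| · |GL(k,F)|, where |GL(ℓ,F)| = ∏_{i=0}^{ℓ−1}(q^ℓ − q^i). -/

import Mathlib

/-- The `n × n` block-diagonal matrix `X_k(b,a)` whose first block is the scalar
matrix `b • I` of size `n - 2k`, followed by `k` diagonal blocks each equal to
`Q(a) = !![0, 1; 0, a]`. -/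
def Xk {F : Type*} [Field F] (n k : ℕ) (b a : F) : Matrix (Fin n) (Fin n) F :=
  Matrix.of fun i j =>
    if (i : ℕ) < n - 2 * k ∨ (j : ℕ) < n - 2 * k then
      if (i : ℕ) = (j : ℕ) then b else 0
    else if ((i : ℕ) - (n - 2 * k)) / 2 = ((j : ℕ) - (n - 2 * k)) / 2 ∧
        ((j : ℕ) - (n - 2 * k)) % 2 = 1 then
      if ((i : ℕ) - (n - 2 * k)) % 2 = 0 then 1 else a
    else 0

/-- `glOrder q ℓ = ∏_{i=0}^{ℓ-1} (q^ℓ - q^i)`, the order of `GL(ℓ, F_q)`. -/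
def glOrder (q ℓ : ℕ) : ℕ := ∏ i ∈ Finset.range ℓ, (q ^ ℓ - q ^ i)

open Matrix

section Helpers

/-- Conjugation and commutation. -/
lemma conj_comm_iff' {N : Type*} [Monoid N] (c : Nˣ) (x y : N) :
    x * (↑c * y * ↑c⁻¹) = (↑c * y * ↑c⁻¹) * x ↔
      (↑c⁻¹ * x * ↑c) * y = y * (↑c⁻¹ * x * ↑c) := by
  constructor
  · intro h
    have := congrArg (fun z => (↑c⁻¹ : N) * z * ↑c) h
    simpa [mul_assoc] using this
  · intro h
    have := congrArg (fun z => (↑c : N) * z * ↑c⁻¹) h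
    simpa [mul_assoc] using this

variable {F : Type*} [Field F]

/-- The cardinality of `GL` over any finite index type. -/
lemma card_GL' [Fintype F] (κ : Type*) [Fintype κ] [DecidableEq κ] :
    Nat.card (GL κ F) = glOrder (Fintype.card F) (Fintype.card κ) := by
  have e : GL κ F ≃* GL (Fin (Fintype.card κ)) F :=
    Units.mapEquiv (Matrix.reindexAlgEquiv F F (Fintype.equivFin κ)).toRingEquiv.toMulEquiv
  rw [Nat.card_congr e.toEquiv, Matrix.card_GL_field, glOrder, ← Fin.prod_univ_eq_prod_range]

variable {A B : Type*} [Fintype A] [Fintype B] [DecidableEq A] [DecidableEq B]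

lemma comm_diag_decomp (x y : F) (hxy : x ≠ y) (P : Matrix (A ⊕ B) (A ⊕ B) F) :
    P * diagonal (Sum.elim (fun _ => x) (fun _ => y)) =
      diagonal (Sum.elim (fun _ => x) (fun _ => y)) * P ↔
    P = fromBlocks P.toBlocks₁₁ 0 0 P.toBlocks₂₂ := by
  set d : A ⊕ B → F := Sum.elim (fun _ => x) (fun _ => y) with hd
  constructor
  · intro h
    have h' : ∀ i j, P i j * d j = d i * P i j := by
      intro i j
      have := Matrix.ext_iff.mpr h i j
      simpa [Matrix.mul_diagonal, Matrix.diagonal_mul] using this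
    ext i j
    rcases i with i | i <;> rcases j with j | j
    · rfl
    · have hyx := h' (Sum.inl i) (Sum.inr j)
      simp only [hd, Sum.elim_inl, Sum.elim_inr] at hyx
      have h0 : P (Sum.inl i) (Sum.inr j) * (y - x) = 0 := by ring_nf; linear_combination hyx
      simp only [fromBlocks, of_apply, Sum.elim_inl, Sum.elim_inr, Matrix.zero_apply]
      rcases mul_eq_zero.mp h0 with h1 | h1
      · exact h1
      · exact absurd (sub_eq_zero.mp h1).symm hxy
    · have hyx := h' (Sum.inr i) (Sum.inl j)
      simp only [hd, Sum.elim_inl, Sum.elim_inr] at hyx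
      have h0 : P (Sum.inr i) (Sum.inl j) * (x - y) = 0 := by ring_nf; linear_combination hyx
      simp only [fromBlocks, of_apply, Sum.elim_inl, Sum.elim_inr, Matrix.zero_apply]
      rcases mul_eq_zero.mp h0 with h1 | h1
      · exact h1
      · exact absurd (sub_eq_zero.mp h1) hxy
    · rfl
  · intro h
    rw [h]
    have hdiag : diagonal d = fromBlocks (diagonal fun _ : A => x) 0 0 (diagonal fun _ : B => y) := by
      rw [fromBlocks_diagonal]
    rw [hdiag, fromBlocks_multiply, fromBlocks_multiply]
    have hx : ∀ (M : Matrix A A F), M * diagonal (fun _ => x) = diagonal (fun _ => x) * M := by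
      intro M; ext i j; simp [Matrix.mul_diagonal, Matrix.diagonal_mul, mul_comm]
    have hy : ∀ (M : Matrix B B F), M * diagonal (fun _ => y) = diagonal (fun _ => y) * M := by
      intro M; ext i j; simp [Matrix.mul_diagonal, Matrix.diagonal_mul, mul_comm]
    simp [hx, hy]

lemma card_centralizer_sum [Fintype F] (x y : F) (hxy : x ≠ y) :
    Nat.card {P : GL (A ⊕ B) F //
        (P : Matrix (A ⊕ B) (A ⊕ B) F) * diagonal (Sum.elim (fun _ => x) (fun _ => y)) =
          diagonal (Sum.elim (fun _ => x) (fun _ => y)) * (P : Matrix (A ⊕ B) (A ⊕ B) F)} =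
      Nat.card (GL A F) * Nat.card (GL B F) := by
  rw [← Nat.card_prod]
  symm
  apply Nat.card_eq_of_bijective
    (f := fun uv : GL A F × GL B F =>
      (⟨⟨fromBlocks (↑uv.1) 0 0 (↑uv.2), fromBlocks (↑uv.1⁻¹) 0 0 (↑uv.2⁻¹),
          by simp [fromBlocks_multiply, ← Matrix.coe_units_inv, ← Units.val_mul],
          by simp [fromBlocks_multiply, ← Matrix.coe_units_inv, ← Units.val_mul]⟩,
        by
          rw [comm_diag_decomp x y hxy]
          simp⟩ :
        {P : GL (A ⊕ B) F //
          (P : Matrix (A ⊕ B) (A ⊕ B) F) * diagonal (Sum.elim (fun _ => x) (fun _ => y)) =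
          diagonal (Sum.elim (fun _ => x) (fun _ => y)) * (P : Matrix (A ⊕ B) (A ⊕ B) F)}))
  constructor
  · rintro ⟨u, v⟩ ⟨u', v'⟩ h
    have hval := congrArg (fun P => ((P : {P : GL (A ⊕ B) F // _}) : GL (A ⊕ B) F).val) h
    simp only at hval
    have h11 := congrArg Matrix.toBlocks₁₁ hval
    have h22 := congrArg Matrix.toBlocks₂₂ hval
    simp only [toBlocks_fromBlocks₁₁, toBlocks_fromBlocks₂₂] at h11 h22
    ext : 1
    · exact Units.ext h11
    · exact Units.ext h22
  · rintro ⟨P, hP⟩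
    have hdec := (comm_diag_decomp x y hxy (P : Matrix (A ⊕ B) (A ⊕ B) F)).mp hP
    have hu : IsUnit ((P : Matrix (A ⊕ B) (A ⊕ B) F).toBlocks₁₁) ∧
        IsUnit ((P : Matrix (A ⊕ B) (A ⊕ B) F).toBlocks₂₂) := by
      rw [← isUnit_fromBlocks_zero₂₁, ← hdec]
      exact P.isUnit
    refine ⟨⟨hu.1.unit, hu.2.unit⟩, ?_⟩
    apply Subtype.ext
    apply Units.ext
    simp only [IsUnit.unit_spec]
    exact hdec.symm

lemma card_centralizer_diagonal {κ : Type*} [Fintype κ] [DecidableEq κ] [Fintype F]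
    (d : κ → F) (x y : F) (hxy : x ≠ y) (hd : ∀ p, d p = x ∨ d p = y)
    [DecidablePred fun p => d p = x] :
    Nat.card {P : GL κ F //
        (P : Matrix κ κ F) * diagonal d = diagonal d * (P : Matrix κ κ F)} =
      Nat.card (GL {p // d p = x} F) * Nat.card (GL {p // ¬ d p = x} F) := by
  classical
  set e := (Equiv.sumCompl fun p => d p = x) with he
  set D' : Matrix _ _ F := diagonal
    (Sum.elim (fun _ : {p // d p = x} => x) (fun _ : {p // ¬ d p = x} => y)) with hD'
  have helim : ∀ p, Sum.elim (fun _ : {p // d p = x} => x)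
      (fun _ : {p // ¬ d p = x} => y) p = d (e p) := by
    rintro (p | p)
    · simp [he, p.2]
    · simp only [Sum.elim_inr, he, Equiv.sumCompl_apply_inr]
      rcases hd p.1 with h | h
      · exact absurd h p.2
      · exact h.symm
  have hDiag : Matrix.reindexAlgEquiv F F e D' = diagonal d := by
    ext i j
    simp only [Matrix.reindexAlgEquiv_apply, Matrix.reindex_apply, Matrix.submatrix_apply, hD',
      Matrix.diagonal_apply, helim, Equiv.apply_symm_apply]
    exact if_congr (Equiv.apply_eq_iff_eq _) rfl rfl
  let φ : GL ({p // d p = x} ⊕ {p // ¬ d p = x}) F ≃* GL κ F :=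
    Units.mapEquiv (Matrix.reindexAlgEquiv F F e).toRingEquiv.toMulEquiv
  have hEquiv : {Q : GL ({p // d p = x} ⊕ {p // ¬ d p = x}) F // Q.val * D' = D' * Q.val} ≃
      {P : GL κ F // (P : Matrix κ κ F) * diagonal d = diagonal d * (P : Matrix κ κ F)} := by
    refine Equiv.subtypeEquiv φ.toEquiv fun Q => ?_
    have hv : ((φ.toEquiv Q : GL κ F) : Matrix κ κ F) = Matrix.reindexAlgEquiv F F e Q.val := rfl
    rw [hv, ← hDiag, ← _root_.map_mul, ← _root_.map_mul, (AlgEquiv.injective _).eq_iff]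
  rw [← Nat.card_congr hEquiv, card_centralizer_sum x y hxy]

/-- The block matrix corresponding to `Xk` on the structured index type. -/
def blkM (m k : ℕ) (b a : F) : Matrix (Fin m ⊕ Fin 2 × Fin k) (Fin m ⊕ Fin 2 × Fin k) F :=
  fromBlocks (diagonal fun _ => b) 0 0 (blockDiagonal fun _ => !![0, 1; 0, a])

/-- The conjugating block matrix. -/
def blkC (m k : ℕ) (a : F) : Matrix (Fin m ⊕ Fin 2 × Fin k) (Fin m ⊕ Fin 2 × Fin k) F :=
  fromBlocks 1 0 0 (blockDiagonal fun _ => !![1, 1; 0, a])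

/-- The diagonal to which `blkM` is conjugate. -/
def dd (m k : ℕ) (b a : F) : Fin m ⊕ Fin 2 × Fin k → F :=
  Sum.elim (fun _ => b) (fun rj => ![0, a] rj.1)

lemma blkM_mul_blkC (m k : ℕ) (b a : F) :
    blkM m k b a * blkC m k a = blkC m k a * diagonal (dd m k b a) := by
  have hD : diagonal (dd m k b a) = fromBlocks (diagonal fun _ : Fin m => b) 0 0
      (blockDiagonal fun _ : Fin k => diagonal ![0, a]) := by
    rw [blockDiagonal_diagonal, fromBlocks_diagonal]
    rfl
  rw [hD, blkM, blkC, fromBlocks_multiply, fromBlocks_multiply]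
  simp only [Matrix.mul_zero, Matrix.zero_mul, add_zero, zero_add, Matrix.mul_one,
    Matrix.one_mul, ← Matrix.blockDiagonal_mul]
  have h2 : !![0, 1; 0, a] * !![1, 1; 0, a] = !![1, 1; 0, a] * diagonal ![0, a] := by
    have : diagonal ![0, a] = !![0, 0; 0, a] := by
      ext i j
      fin_cases i <;> fin_cases j <;> simp [diagonal]
    rw [this]
    ext i j
    fin_cases i <;> fin_cases j <;>
      simp [Matrix.mul_apply, Fin.sum_univ_two]
  rw [h2]

lemma isUnit_blkC (m k : ℕ) (a : F) (ha : a ≠ 0) : IsUnit (blkC m k a) := by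
  rw [Matrix.isUnit_iff_isUnit_det, blkC, det_fromBlocks_zero₂₁, det_blockDiagonal]
  simp only [det_one, one_mul, Matrix.det_fin_two_of, Finset.prod_const]
  have h : a - (0 : F) = a := by ring
  rw [h]
  exact (isUnit_iff_ne_zero.mpr ha).pow _

noncomputable def embE (m k n : ℕ) (h : n = m + 2 * k) : (Fin m ⊕ Fin 2 × Fin k) ≃ Fin n :=
  Equiv.ofBijective (fun p => ⟨Sum.elim (fun i : Fin m => (i : ℕ))
      (fun rj : Fin 2 × Fin k => m + 2 * (rj.2 : ℕ) + (rj.1 : ℕ)) p, by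
      rcases p with i | ⟨r, j⟩
      · have := i.2; simp only [Sum.elim_inl]; omega
      · have := r.2; have := j.2; simp only [Sum.elim_inr]; omega⟩) (by
    rw [Fintype.bijective_iff_injective_and_card]
    constructor
    · rintro (i | ⟨r, j⟩) (i' | ⟨r', j'⟩) hh <;>
        simp only [Fin.mk.injEq, Sum.elim_inl, Sum.elim_inr] at hh
      · exact congrArg Sum.inl (Fin.ext hh)
      · exact absurd hh (by have := i.2; omega)
      · exact absurd hh (by have := i'.2; omega)
      · have hr := r.2; have hr' := r'.2
        have hrr : (r : ℕ) = r' ∧ (j : ℕ) = j' := by omega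
        exact congrArg Sum.inr (Prod.ext (Fin.ext hrr.1) (Fin.ext hrr.2))
    · simp only [Fintype.card_sum, Fintype.card_fin, Fintype.card_prod]
      omega)

lemma embE_val (m k n : ℕ) (h : n = m + 2 * k) (p : Fin m ⊕ Fin 2 × Fin k) :
    ((embE m k n h p : Fin n) : ℕ) =
      Sum.elim (fun i : Fin m => (i : ℕ))
        (fun rj : Fin 2 × Fin k => m + 2 * (rj.2 : ℕ) + (rj.1 : ℕ)) p := rfl

lemma embE_inl (m k n : ℕ) (h : n = m + 2 * k) (i : Fin m) :
    ((embE m k n h (Sum.inl i) : Fin n) : ℕ) = (i : ℕ) := by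
  rw [embE_val, Sum.elim_inl]

lemma embE_inr (m k n : ℕ) (h : n = m + 2 * k) (r : Fin 2) (j : Fin k) :
    ((embE m k n h (Sum.inr (r, j)) : Fin n) : ℕ) = m + 2 * (j : ℕ) + (r : ℕ) := by
  rw [embE_val, Sum.elim_inr]

lemma Xk_eq_reindex (n k : ℕ) (h2k : 2 * k ≤ n) (b a : F) :
    Xk n k b a = Matrix.reindexAlgEquiv F F (embE (n - 2 * k) k n (by omega))
      (blkM (n - 2 * k) k b a) := by
  set e := embE (n - 2 * k) k n (by omega) with he
  ext i j
  rw [Matrix.reindexAlgEquiv_apply, Matrix.reindex_apply, Matrix.submatrix_apply]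
  obtain ⟨p, rfl⟩ := e.surjective i
  obtain ⟨q, rfl⟩ := e.surjective j
  rw [Equiv.symm_apply_apply, Equiv.symm_apply_apply]
  rcases p with i | ⟨r, j⟩ <;> rcases q with i' | ⟨r', j'⟩ <;>
    simp only [Xk, Matrix.of_apply, he, embE_inl, embE_inr]
  · rw [if_pos (Or.inl i.2)]
    simp [blkM, Matrix.diagonal_apply, Fin.val_inj]
  · rw [if_pos (Or.inl i.2), if_neg (by have := i.2; omega)]
    simp [blkM]
  · rw [if_pos (Or.inr i'.2), if_neg (by have := i'.2; omega)]
    simp [blkM]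
  · have hr := r.2; have hr' := r'.2
    rw [if_neg (by omega)]
    simp only [blkM, fromBlocks_apply₂₂, blockDiagonal_apply]
    have e1 : n - 2 * k + 2 * (j : ℕ) + (r : ℕ) - (n - 2 * k) = 2 * (j : ℕ) + (r : ℕ) := by
      omega
    have e2 : n - 2 * k + 2 * (j' : ℕ) + (r' : ℕ) - (n - 2 * k) = 2 * (j' : ℕ) + (r' : ℕ) := by
      omega
    simp only [e1, e2]
    by_cases hj : (j : ℕ) = (j' : ℕ)
    · rw [if_pos (Fin.ext hj : (⟨r, j⟩ : Fin 2 × Fin k).2 = (⟨r', j'⟩ : Fin 2 × Fin k).2)]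
      by_cases hr'1 : (r' : ℕ) = 1
      · rw [if_pos ⟨by omega, by omega⟩]
        have hr'e : r' = 1 := Fin.ext (by simpa using hr'1)
        rcases (by omega : (r : ℕ) = 0 ∨ (r : ℕ) = 1) with h0 | h1
        · have hre : r = 0 := Fin.ext (by simpa using h0)
          rw [if_pos (by omega), hre, hr'e]
          simp
        · have hre : r = 1 := Fin.ext (by simpa using h1)
          rw [if_neg (by omega), hre, hr'e]
          simp
      · rw [if_neg (by rintro ⟨-, hc⟩; omega)]
        have hr'e : r' = 0 := Fin.ext (by simpa using (by omega : (r' : ℕ) = 0))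
        have hz : !![(0 : F), 1; 0, a] r 0 = 0 := by fin_cases r <;> simp
        rw [hr'e, hz]
    · rw [if_neg (by rintro ⟨hc, -⟩; omega),
        if_neg (fun hE => hj (congrArg Fin.val hE))]

/-- The positions of `dd` carrying the value `a` in the second summand. -/
def eqA {k : ℕ} {a : F} (ha : a ≠ 0) : {rj : Fin 2 × Fin k // ![(0 : F), a] rj.1 = a} ≃ Fin k where
  toFun x := x.1.2
  invFun j := ⟨(1, j), by simp⟩
  left_inv := by
    rintro ⟨⟨r, j⟩, h⟩
    have hr : r = 1 := by
      have h2 := r.2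
      rcases (by omega : (r : ℕ) = 0 ∨ (r : ℕ) = 1) with h0 | h1
      · exfalso
        have hre : r = 0 := Fin.ext (by simpa using h0)
        rw [hre] at h
        simp at h
        exact ha h.symm
      · exact Fin.ext (by simpa using h1)
    subst hr
    rfl
  right_inv j := rfl

def eqB {k : ℕ} {a : F} (ha : a ≠ 0) :
    {rj : Fin 2 × Fin k // ¬ ![(0 : F), a] rj.1 = a} ≃ Fin k where
  toFun x := x.1.2
  invFun j := ⟨(0, j), by simpa using (Ne.symm ha)⟩
  left_inv := by
    rintro ⟨⟨r, j⟩, h⟩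
    have hr : r = 0 := by
      have h2 := r.2
      rcases (by omega : (r : ℕ) = 0 ∨ (r : ℕ) = 1) with h0 | h1
      · exact Fin.ext (by simpa using h0)
      · exfalso
        have hre : r = 1 := Fin.ext (by simpa using h1)
        rw [hre] at h
        simp at h
    subst hr
    rfl
  right_inv j := rfl

end Helpers

theorem stmt_8 (F : Type*) [Field F] [Fintype F] (a : F) (ha : a ≠ 0) (n k : ℕ)
    (hn : 2 ≤ n) (hk1 : 1 ≤ k) (hk : k ≤ n / 2) (b : F) (hb : b = 0 ∨ b = a) :
    Nat.card {P : GL (Fin n) F //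
        (P : Matrix (Fin n) (Fin n) F) * Xk n k b a =
          Xk n k b a * (P : Matrix (Fin n) (Fin n) F)} =
      glOrder (Fintype.card F) (n - k) * glOrder (Fintype.card F) k := by
  classical
  have h2k : 2 * k ≤ n := by omega
  set m := n - 2 * k with hm
  have hXk : Xk n k b a = Matrix.reindexAlgEquiv F F (embE m k n (by omega)) (blkM m k b a) :=
    Xk_eq_reindex n k h2k b a
  set e := embE m k n (by omega) with he
  let φ : GL (Fin m ⊕ Fin 2 × Fin k) F ≃* GL (Fin n) F :=
    Units.mapEquiv (Matrix.reindexAlgEquiv F F e).toRingEquiv.toMulEquiv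
  have E1 : {Q : GL (Fin m ⊕ Fin 2 × Fin k) F //
        Q.val * blkM m k b a = blkM m k b a * Q.val} ≃
      {P : GL (Fin n) F //
        (P : Matrix (Fin n) (Fin n) F) * Xk n k b a =
          Xk n k b a * (P : Matrix (Fin n) (Fin n) F)} := by
    refine Equiv.subtypeEquiv φ.toEquiv fun Q => ?_
    have hv : ((φ.toEquiv Q : GL (Fin n) F) : Matrix (Fin n) (Fin n) F)
        = Matrix.reindexAlgEquiv F F e Q.val := rfl
    rw [hv, hXk, ← _root_.map_mul, ← _root_.map_mul, (AlgEquiv.injective _).eq_iff]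
  have hC := isUnit_blkC m k a ha
  set c : GL (Fin m ⊕ Fin 2 × Fin k) F := hC.unit with hc
  have hcv : (c : Matrix (Fin m ⊕ Fin 2 × Fin k) (Fin m ⊕ Fin 2 × Fin k) F) = blkC m k a :=
    hC.unit_spec
  have hM : blkM m k b a = c.val * diagonal (dd m k b a) * (c⁻¹).val := by
    have h1 : blkM m k b a * c.val = c.val * diagonal (dd m k b a) := by
      rw [hcv]; exact blkM_mul_blkC m k b a
    calc blkM m k b a = blkM m k b a * (c.val * (c⁻¹).val) := by
          rw [Units.mul_inv, mul_one]
      _ = (blkM m k b a * c.val) * (c⁻¹).val := by rw [mul_assoc]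
      _ = c.val * diagonal (dd m k b a) * (c⁻¹).val := by rw [h1]
  have E2 : {Q : GL (Fin m ⊕ Fin 2 × Fin k) F //
        Q.val * blkM m k b a = blkM m k b a * Q.val} ≃
      {Q : GL (Fin m ⊕ Fin 2 × Fin k) F //
        Q.val * diagonal (dd m k b a) = diagonal (dd m k b a) * Q.val} := by
    refine Equiv.subtypeEquiv ((Equiv.mulLeft c⁻¹).trans (Equiv.mulRight c)) fun Q => ?_
    have hv : ((((Equiv.mulLeft c⁻¹).trans (Equiv.mulRight c)) Q) : GL (Fin m ⊕ Fin 2 × Fin k) F).val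
        = (c⁻¹).val * Q.val * c.val := by
      simp [Units.val_mul, mul_assoc]
    rw [hv, hM]
    exact conj_comm_iff' c Q.val (diagonal (dd m k b a))
  rw [← Nat.card_congr E1, Nat.card_congr E2,
    card_centralizer_diagonal (dd m k b a) a 0 ha (by
      rintro (i | ⟨r, j⟩)
      · rcases hb with h | h
        · exact Or.inr h
        · exact Or.inl h
      · show ![(0 : F), a] r = a ∨ ![(0 : F), a] r = 0
        have h2 := r.2
        rcases (by omega : (r : ℕ) = 0 ∨ (r : ℕ) = 1) with h0 | h1
        · have : r = 0 := Fin.ext (by simpa using h0)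
          subst this; right; simp
        · have : r = 1 := Fin.ext (by simpa using h1)
          subst this; left; simp),
    card_GL', card_GL']
  have hsplitA : {p : Fin m ⊕ Fin 2 × Fin k // dd m k b a p = a} ≃
      {i : Fin m // b = a} ⊕ {rj : Fin 2 × Fin k // ![(0 : F), a] rj.1 = a} :=
    Equiv.subtypeSum
  have hsplitB : {p : Fin m ⊕ Fin 2 × Fin k // ¬ dd m k b a p = a} ≃
      {i : Fin m // ¬ b = a} ⊕ {rj : Fin 2 × Fin k // ¬ ![(0 : F), a] rj.1 = a} :=
    Equiv.subtypeSum
  rcases hb with hb0 | hba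
  · subst hb0
    have hA : Fintype.card {p : Fin m ⊕ Fin 2 × Fin k // dd m k 0 a p = a} = k := by
      have hE : IsEmpty {i : Fin m // (0 : F) = a} := ⟨fun x => ha x.2.symm⟩
      rw [← Nat.card_eq_fintype_card, Nat.card_congr hsplitA, Nat.card_sum,
        Nat.card_congr (eqA ha), Nat.card_of_isEmpty]
      simp [Nat.card_eq_fintype_card]
    have hB : Fintype.card {p : Fin m ⊕ Fin 2 × Fin k // ¬ dd m k 0 a p = a} = n - k := by
      rw [← Nat.card_eq_fintype_card, Nat.card_congr hsplitB, Nat.card_sum,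
        Nat.card_congr (eqB ha),
        Nat.card_congr (Equiv.subtypeUnivEquiv (fun i (hh : (0 : F) = a) => ha hh.symm))]
      simp only [Nat.card_eq_fintype_card, Fintype.card_fin]
      omega
    rw [hA, hB, Nat.mul_comm]
  · subst hba
    have hA : Fintype.card {p : Fin m ⊕ Fin 2 × Fin k // dd m k b b p = b} = n - k := by
      rw [← Nat.card_eq_fintype_card, Nat.card_congr hsplitA, Nat.card_sum,
        Nat.card_congr (eqA ha),
        Nat.card_congr (Equiv.subtypeUnivEquiv (fun i => (rfl : b = b)))]
      simp only [Nat.card_eq_fintype_card, Fintype.card_fin]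
      omega
    have hB : Fintype.card {p : Fin m ⊕ Fin 2 × Fin k // ¬ dd m k b b p = b} = k := by
      have hE : IsEmpty {i : Fin m // ¬ b = b} := ⟨fun x => x.2 rfl⟩
      rw [← Nat.card_eq_fintype_card, Nat.card_congr hsplitB, Nat.card_sum,
        Nat.card_congr (eqB ha), Nat.card_of_isEmpty]
      simp [Nat.card_eq_fintype_card]
    rw [hA, hB]
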